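/- Let ν be a non-atomic probability measure on the boundary of a δ-hyperbolic space (G, d) with basepoint 1, such that ν is the hitting measure of a random walk converging to the boundary almost surely. Suppose for contradiction that the shadows do not decay uniformly: then there exist ε > 0 and a sequence of shadows S_1(x_i, r_i) with r_i → ∞ and ν(S_1(x_i, r_i)) ≥ ε. Show that the set U of boundary points lying in infinitely many of these shadows is a single point, contradicting non-atomicity. Conclude: for any ε > 0 there is a constant K(ε) such that ν(S_1(x, r)) ≤ ε whenever r ≥ K(ε), uniformly in x. -/

import Mathlib

open MeasureTheory Filter

/-- Let `ν` be a non-atomic Borel probability measure on the boundary, and suppose the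
shadows `S x r` have diameter at most `f r` with `f r → 0` as `r → ∞` (as holds for shadows
in a δ-hyperbolic space, measured in a visual metric on the boundary: any two points of
`S_1(x,r)` have Gromov product at least `r - 2δ`). Then for every `ε > 0` there is a
constant `K(ε)` such that `ν(S x r) ≤ ε` whenever `r ≥ K(ε)`, uniformly in `x`. -/
theorem shadow_measure_uniformly_small
    {B : Type*} [MetricSpace B] [MeasurableSpace B] [BorelSpace B]
    (ν : Measure B) [IsProbabilityMeasure ν] [NullSingletonClass ν]
    {X : Type*} (S : X → ℝ → Set B)
    (hmeas : ∀ x r, MeasurableSet (S x r))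
    (f : ℝ → ℝ) (hf : Tendsto f atTop (nhds 0))
    (hdiam : ∀ x r, ∀ y ∈ S x r, ∀ z ∈ S x r, dist y z ≤ f r) :
    ∀ ε : ℝ, 0 < ε → ∃ K : ℝ, ∀ (x : X) (r : ℝ), K ≤ r →
      ν (S x r) ≤ ENNReal.ofReal ε := by
  intro ε hε
  by_contra h
  push_neg at h
  choose x r hr hν using h
  set A : ℕ → Set B := fun n => S (x n) (r n) with hA
  have hrtop : Tendsto (fun n : ℕ => r n) atTop atTop :=
    tendsto_atTop_mono (fun n => hr n) tendsto_natCast_atTop_atTop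
  have hfr : Tendsto (fun n : ℕ => f (r n)) atTop (nhds 0) := hf.comp hrtop
  -- the tail unions
  set U : ℕ → Set B := fun n => ⋃ m, ⋃ (_ : n ≤ m), A m with hUdef
  have hUanti : Antitone U := by
    intro a b hab
    exact Set.biUnion_subset_biUnion_left fun m hm => le_trans hab hm
  have hUmeas : ∀ n, MeasurableSet (U n) :=
    fun n => MeasurableSet.biUnion (Set.to_countable _) fun m _ => hmeas _ _
  have hUL : ∀ n, ENNReal.ofReal ε ≤ ν (U n) := by
    intro n
    refine le_trans (hν n).le (measure_mono ?_)
    intro z hz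
    rw [hUdef]
    exact Set.mem_biUnion (by exact le_refl n) hz
  have hLmeas : ν (⋂ n, U n) = ⨅ n, ν (U n) :=
    hUanti.measure_iInter (fun n => (hUmeas n).nullMeasurableSet)
      ⟨0, measure_ne_top ν _⟩
  have hL : ENNReal.ofReal ε ≤ ν (⋂ n, U n) := by
    rw [hLmeas]; exact le_iInf hUL
  have hLne : (⋂ n, U n).Nonempty := by
    apply nonempty_of_measure_ne_zero (μ := ν)
    intro h0
    rw [h0] at hL
    exact absurd hL (by simpa using (ENNReal.ofReal_pos.mpr hε))
  obtain ⟨x₀, hx₀⟩ := hLne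
  have hx₀' : ∀ n : ℕ, ∃ m, n ≤ m ∧ x₀ ∈ A m := by
    intro n
    have h2 := Set.mem_iInter.mp hx₀ n
    rw [hUdef] at h2
    simpa using h2
  -- every closed ball around x₀ has measure ≥ ε
  have hball : ∀ t : ℝ, 0 < t → ENNReal.ofReal ε ≤ ν (Metric.closedBall x₀ t) := by
    intro t ht
    obtain ⟨N, hN⟩ := (Metric.tendsto_atTop.mp hfr t ht)
    obtain ⟨m, hm, hxm⟩ := hx₀' N
    have hsub : A m ⊆ Metric.closedBall x₀ t := by
      intro z hz
      have h1 : dist z x₀ ≤ f (r m) := hdiam _ _ z hz x₀ hxm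
      have h2 : f (r m) ≤ t := by
        have := hN m hm
        rw [Real.dist_eq, sub_zero] at this
        exact (le_abs_self _).trans this.le
      exact Metric.mem_closedBall.mpr (h1.trans h2)
    exact le_trans (hν m).le (measure_mono hsub)
  -- hence the singleton has positive measure
  have hsing : {x₀} = ⋂ n : ℕ, Metric.closedBall x₀ (1 / (n + 1)) := by
    ext z
    simp only [Set.mem_singleton_iff, Set.mem_iInter, Metric.mem_closedBall]
    constructor
    · rintro rfl
      intro n
      simp only [dist_self]
      positivity
    · intro hz
      have hd : dist z x₀ ≤ 0 := by
        refine ge_of_tendsto' tendsto_one_div_add_atTop_nhds_zero_nat fun n => ?_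
        exact hz n
      have := dist_nonneg (x := z) (y := x₀)
      have : dist z x₀ = 0 := le_antisymm hd this
      exact dist_eq_zero.mp this
  have hanti : Antitone fun n : ℕ => Metric.closedBall x₀ (1 / (n + 1)) := by
    intro a b hab
    apply Metric.closedBall_subset_closedBall
    gcongr
  have hmeq : ν {x₀} = ⨅ n : ℕ, ν (Metric.closedBall x₀ (1 / (n + 1))) := by
    rw [hsing]
    exact hanti.measure_iInter
      (fun n => Metric.isClosed_closedBall.measurableSet.nullMeasurableSet)
      ⟨0, measure_ne_top ν _⟩
  have : ENNReal.ofReal ε ≤ ν {x₀} := by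
    rw [hmeq]
    exact le_iInf fun n => hball _ (by positivity)
  rw [measure_singleton] at this
  exact absurd this (by simpa using (ENNReal.ofReal_pos.mpr hε))
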